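/- Let $a \geq 2$ be an integer and $p \geq q > s > 0$ reals with $s_m < s < s_2$, where $s_m = \frac{6(2^a-1)p - 3(2^a-2)q}{2^a - 4^a + 8^a}$ and $s_2 = \frac{3}{7} \cdot \frac{(4^a - 12)q + 12p}{4^a}$. Define $D = 2^a(2p-3q+s) + 4^a(q+s) - 2p + 2q$ and $\bar h_1(b) = \frac{2^{-b}(2^a - 2^b)\left(6p + 3(2^{a+b} - 2)q - 2^a(2^a + 2^b)s\right)}{3D}$ for real $b$. Then $b^* := \frac{1}{2}\log_2 \frac{2^{2a} s + 6(q - p)}{3q - s}$ is well defined (both $2^{2a}s + 6(q-p) > 0$ and $3q - s > 0$), satisfies $0 < b^* < a$, and $\bar h_1(b) \leq \bar h_1(b^*)$ for all real $b \in [0, a]$. -/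

import Mathlib

/-- First-order hierarchy estimate of the direct ranking of an RSBM with `2^a` equal
classes merged into `2^(a-b)` equal classes (real merging parameter `b`, linear penalty). -/
noncomputable def hbar1 (p q s : ℝ) (a : ℕ) (b : ℝ) : ℝ :=
  (2 : ℝ) ^ (-b) * ((2 : ℝ) ^ (a : ℝ) - (2 : ℝ) ^ b) *
      (6 * p + 3 * ((2 : ℝ) ^ ((a : ℝ) + b) - 2) * q -
        (2 : ℝ) ^ (a : ℝ) * ((2 : ℝ) ^ (a : ℝ) + (2 : ℝ) ^ b) * s) /
    (3 * ((2 : ℝ) ^ (a : ℝ) * (2 * p - 3 * q + s) + (4 : ℝ) ^ (a : ℝ) * (q + s)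
      - 2 * p + 2 * q))

/-- The optimal merging parameter `b* = (1/2) log₂((2^(2a) s + 6(q-p))/(3q - s))`. -/
noncomputable def bstar (p q s : ℝ) (a : ℕ) : ℝ :=
  (1 / 2) * Real.logb 2 (((2 : ℝ) ^ (2 * a) * s + 6 * (q - p)) / (3 * q - s))

private lemma key_ineq (p q s A D x y : ℝ) (hD : 0 < D) (hA : 0 < A)
    (hb : 0 < 3 * q - s) (hx : 0 < x) (hy0 : 0 < y)
    (hy : y ^ 2 * (3 * q - s) = A ^ 2 * s + 6 * q - 6 * p) :
    x⁻¹ * (A - x) * (6 * p + 3 * (A * x - 2) * q - A * (A + x) * s) / (3 * D) ≤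
      y⁻¹ * (A - y) * (6 * p + 3 * (A * y - 2) * q - A * (A + y) * s) / (3 * D) := by
  have hkey : y⁻¹ * (A - y) * (6 * p + 3 * (A * y - 2) * q - A * (A + y) * s) -
      x⁻¹ * (A - x) * (6 * p + 3 * (A * x - 2) * q - A * (A + x) * s)
      = A * (3 * q - s) * (x - y) ^ 2 / x := by
    field_simp
    linear_combination A * (x - y) * hy
  have hpos : 0 ≤ A * (3 * q - s) * (x - y) ^ 2 / x := by positivity
  have h2 : x⁻¹ * (A - x) * (6 * p + 3 * (A * x - 2) * q - A * (A + x) * s) ≤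
      y⁻¹ * (A - y) * (6 * p + 3 * (A * y - 2) * q - A * (A + y) * s) := by linarith
  gcongr

set_option maxHeartbeats 2000000 in
/-- In the twitter-like regime, for `s_m < s < s_2`, the critical merging parameter
`b*` is well defined, lies strictly between `0` and `a`, and maximises the hierarchy
estimate `hbar1` over `b ∈ [0, a]`. -/
theorem stmt_5 (a : ℕ) (ha : 2 ≤ a) (p q s : ℝ) (hpq : q ≤ p) (hqs : s < q) (hs : 0 < s)
    (hsm : (6 * ((2 : ℝ) ^ a - 1) * p - 3 * ((2 : ℝ) ^ a - 2) * q) /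
      ((2 : ℝ) ^ a - (4 : ℝ) ^ a + (8 : ℝ) ^ a) < s)
    (hs2 : s < 3 / 7 * (((4 : ℝ) ^ a - 12) * q + 12 * p) / (4 : ℝ) ^ a) :
    (0 < (2 : ℝ) ^ (2 * a) * s + 6 * (q - p) ∧ 0 < 3 * q - s) ∧
    (0 < bstar p q s a ∧ bstar p q s a < a) ∧
    ∀ b : ℝ, 0 ≤ b → b ≤ a → hbar1 p q s a b ≤ hbar1 p q s a (bstar p q s a) := by
  set A : ℝ := (2 : ℝ) ^ a with hAdef
  have hq : 0 < q := lt_trans hs hqs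
  have hp : 0 < p := lt_of_lt_of_le hq hpq
  have h4a : (4 : ℝ) ^ a = A ^ 2 := by
    rw [hAdef, ← pow_mul, mul_comm, pow_mul]; norm_num
  have h8a : (8 : ℝ) ^ a = A ^ 3 := by
    rw [hAdef, ← pow_mul, mul_comm, pow_mul]; norm_num
  have h2a2 : (2 : ℝ) ^ (2 * a) = A ^ 2 := by
    rw [hAdef, ← pow_mul, mul_comm]
  have hA4 : (4 : ℝ) ≤ A := by
    calc (4 : ℝ) = 2 ^ 2 := by norm_num
    _ ≤ 2 ^ a := by exact pow_le_pow_right₀ one_le_two ha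
  have hA0 : (0 : ℝ) < A := by linarith
  have hden : (0 : ℝ) < A - A ^ 2 + A ^ 3 := by nlinarith
  have hsm' : 6 * (A - 1) * p - 3 * (A - 2) * q < s * (A - A ^ 2 + A ^ 3) := by
    rw [h4a, h8a] at hsm
    exact (div_lt_iff₀ hden).mp hsm
  have hs2' : 7 * (A ^ 2 * s) < 3 * (A ^ 2 - 12) * q + 36 * p := by
    rw [h4a] at hs2
    have hA2 : (0 : ℝ) < A ^ 2 := by positivity
    rw [lt_div_iff₀ hA2] at hs2
    nlinarith [hs2]
  have hβ : 0 < 3 * q - s := by linarith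
  -- p is bounded: 2p < (A²-2)q
  have hpb : 2 * p < (A ^ 2 - 2) * q := by
    have h1 : 6 * (A - 1) * p - 3 * (A - 2) * q < q * (A - A ^ 2 + A ^ 3) := by
      nlinarith [mul_lt_mul_of_pos_right hqs hden]
    nlinarith [mul_pos hq (by nlinarith : (0:ℝ) < 2 * A ^ 3 - 2 * A ^ 2 - 10 * A + 12),
      mul_pos (by linarith : (0:ℝ) < A - 1) hq]
  -- γ := A²s + 6q - 6p
  have hγβ : 3 * q - s < A ^ 2 * s + 6 * q - 6 * p := by
    have hW : (s * (A ^ 2 + 1) + 3 * q - 6 * p) * (A - A ^ 2 + A ^ 3)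
        = (s * (A - A ^ 2 + A ^ 3) - (6 * (A - 1) * p - 3 * (A - 2) * q)) * (A ^ 2 + 1)
          + (3 * q * (A ^ 2 + 2) - 6 * p) := by ring
    have h2 : 0 < 3 * q * (A ^ 2 + 2) - 6 * p := by nlinarith
    have h3 : 0 < (s * (A ^ 2 + 1) + 3 * q - 6 * p) * (A - A ^ 2 + A ^ 3) := by
      rw [hW]; nlinarith [mul_pos (by linarith : (0:ℝ) < s * (A - A ^ 2 + A ^ 3) - (6 * (A - 1) * p - 3 * (A - 2) * q)) (by positivity : (0:ℝ) < A ^ 2 + 1)]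
    have h4 := div_pos h3 hden
    rw [mul_div_assoc, div_self hden.ne', mul_one] at h4
    linarith
  have hγ : 0 < A ^ 2 * s + 6 * q - 6 * p := by linarith
  have hγA : A ^ 2 * s + 6 * q - 6 * p < A ^ 2 * (3 * q - s) := by nlinarith
  have hD : (0 : ℝ) < A * (2 * p - 3 * q + s) + A ^ 2 * (q + s) - 2 * p + 2 * q := by
    nlinarith [mul_pos hA0 hs, mul_pos (mul_pos hA0 hA0) hs,
      mul_nonneg (by linarith : (0:ℝ) ≤ A - 1) (by linarith : (0:ℝ) ≤ 2 * p - 2 * q),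
      mul_nonneg (mul_nonneg (by linarith : (0:ℝ) ≤ A - 1) (by linarith : (0:ℝ) ≤ A - 2)) hq.le]
  -- the ratio
  set r : ℝ := (A ^ 2 * s + 6 * q - 6 * p) / (3 * q - s) with hrdef
  have hr1 : 1 < r := (one_lt_div hβ).mpr hγβ
  have hr0 : 0 < r := lt_trans one_pos hr1
  have hrA : r < A ^ 2 := (div_lt_iff₀ hβ).mpr hγA
  have hbs : bstar p q s a = (1 / 2) * Real.logb 2 r := by
    unfold bstar
    rw [h2a2, hrdef]; ring_nf
  have hγ6 : 0 < (2 : ℝ) ^ (2 * a) * s + 6 * (q - p) := by rw [h2a2]; linarith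
  refine ⟨⟨hγ6, hβ⟩, ⟨?_, ?_⟩, ?_⟩
  · rw [hbs]
    have := Real.logb_pos (by norm_num : (1:ℝ) < 2) hr1
    linarith
  · rw [hbs]
    have hlt : Real.logb 2 r < 2 * a := by
      rw [Real.logb_lt_iff_lt_rpow (by norm_num) hr0]
      have : (2 : ℝ) ^ ((2 * a : ℕ) : ℝ) = A ^ 2 := by
        rw [Real.rpow_natCast, h2a2]
      push_cast at this
      rw [this]
      exact hrA
    linarith
  · intro b hb0 hba
    have hxA : (2 : ℝ) ^ (a : ℝ) = A := by
      rw [hAdef, Real.rpow_natCast]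
    have h4A : (4 : ℝ) ^ (a : ℝ) = A ^ 2 := by
      rw [← h4a, Real.rpow_natCast]
    set x : ℝ := (2 : ℝ) ^ b with hxdef
    set y : ℝ := (2 : ℝ) ^ (bstar p q s a) with hydef
    have hx0 : 0 < x := Real.rpow_pos_of_pos two_pos b
    have hy0 : 0 < y := Real.rpow_pos_of_pos two_pos _
    have hy2 : y ^ 2 * (3 * q - s) = A ^ 2 * s + 6 * q - 6 * p := by
      have : y ^ 2 = r := by
        rw [hydef, hbs, ← Real.rpow_natCast ((2:ℝ) ^ ((1:ℝ)/2 * Real.logb 2 r)) 2,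
          ← Real.rpow_mul (by norm_num)]
        push_cast
        rw [show (1:ℝ)/2 * Real.logb 2 r * 2 = Real.logb 2 r by ring]
        exact Real.rpow_logb (by norm_num) (by norm_num) hr0
      rw [this, hrdef, div_mul_cancel₀ _ (ne_of_gt hβ)]
    have hform : ∀ c : ℝ, hbar1 p q s a c =
        ((2:ℝ) ^ c)⁻¹ * (A - (2:ℝ) ^ c) *
          (6 * p + 3 * (A * (2:ℝ) ^ c - 2) * q - A * (A + (2:ℝ) ^ c) * s) /
        (3 * (A * (2 * p - 3 * q + s) + A ^ 2 * (q + s) - 2 * p + 2 * q)) := by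
      intro c
      unfold hbar1
      rw [hxA, h4A, Real.rpow_add two_pos, hxA, Real.rpow_neg (by norm_num)]
    rw [hform b, hform (bstar p q s a), ← hxdef, ← hydef]
    exact key_ineq p q s A _ x y hD hA0 hβ hx0 hy0 hy2
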